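/- Let P be a finite p-group, p odd, that is p-central of height p−1. Then P contains no subgroup isomorphic to the regular wreath product C_p ≀ C_p. -/

import Mathlib

/-- `Omega p i G` is the subgroup of `G` generated by all elements of order dividing `p^i`. -/
def Omega (p i : ℕ) (G : Type*) [Group G] : Subgroup G :=
  Subgroup.closure {x : G | x ^ p ^ i = 1}

variable (p : ℕ)

/-- The cyclic-shift automorphism of `(C_p)^p = ZMod p → Multiplicative (ZMod p)`. -/
def shiftAut (c : ZMod p) : MulAut (ZMod p → Multiplicative (ZMod p)) where
  toFun f := fun i => f (i + c)
  invFun f := fun i => f (i - c)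
  left_inv f := by funext i; simp
  right_inv f := by funext i; simp
  map_mul' f g := rfl

/-- The action of the top `C_p` on the base `(C_p)^p` by cyclic shifts. -/
def shiftHom : Multiplicative (ZMod p) →* MulAut (ZMod p → Multiplicative (ZMod p)) where
  toFun c := shiftAut p c.toAdd
  map_one' := by
    ext f i
    simp [shiftAut]
  map_mul' c d := by
    ext f i
    simp [shiftAut, add_comm, add_assoc, add_left_comm]

/-- The regular wreath product `C_p ≀ C_p`. -/
def WreathCpCp : Type :=
  (ZMod p → Multiplicative (ZMod p)) ⋊[shiftHom p] Multiplicative (ZMod p)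

instance : Group (WreathCpCp p) := by unfold WreathCpCp; infer_instance

/-! ### Auxiliary machinery -/

open SemidirectProduct

/-- Iterated commutator `⁅…⁅⁅x, g₁⁆, g₂⁆, …, gₙ⁆` along a list. -/
def Lcomm {G : Type*} [Group G] (x : G) (l : List G) : G :=
  List.foldl (fun a g => a * g * a⁻¹ * g⁻¹) x l

theorem Lcomm_eq_one {G : Type*} [Group G] :
    ∀ (l : List G) (x : G), x ∈ upperCentralSeries G l.length → Lcomm x l = 1 := by
  intro l
  induction l with
  | nil =>
      intro x hx
      simpa [Lcomm, upperCentralSeries_zero] using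
        (by exact hx : x ∈ (⊥ : Subgroup G))
  | cons g l ih =>
      intro x hx
      have : x * g * x⁻¹ * g⁻¹ ∈ upperCentralSeries G l.length :=
        (mem_upperCentralSeries_succ_iff).1 hx g
      simpa [Lcomm] using ih _ this

theorem Lcomm_map {G H : Type*} [Group G] [Group H] (ψ : G →* H) :
    ∀ (l : List G) (x : G), Lcomm (ψ x) (l.map ψ) = ψ (Lcomm x l) := by
  intro l
  induction l with
  | nil => intro x; rfl
  | cons g l ih =>
      intro x
      simp only [Lcomm, List.map_cons, List.foldl_cons] at *
      rw [← map_inv, ← map_inv, ← map_mul, ← map_mul, ← map_mul, ih]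

lemma val_sub_one' {p : ℕ} [NeZero p] {x : ZMod p} (hx : x ≠ 0) : (x - 1).val = x.val - 1 := by
  have h1 : 1 ≤ x.val := Nat.one_le_iff_ne_zero.2 (fun h => hx ((ZMod.val_eq_zero x).1 h))
  have h2 : x.val - 1 < p := lt_of_le_of_lt (Nat.sub_le _ _) (ZMod.val_lt x)
  have : x - 1 = ((x.val - 1 : ℕ) : ZMod p) := by
    push_cast [Nat.cast_sub h1]
    rw [ZMod.natCast_zmod_val]
  rw [this, ZMod.val_cast_of_lt h2]

/-- The value of the `k`-fold difference operator applied to (minus) a delta function. -/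
def aFun (p k : ℕ) : ZMod p → ZMod p := fun i => (-1) ^ ((-i).val + 1) * (k.choose (-i).val)

lemma aFun_rec {p : ℕ} [NeZero p] (k : ℕ) (hk : k + 2 ≤ p) (i : ZMod p) :
    aFun p (k + 1) i = aFun p k i - aFun p k (i + 1) := by
  by_cases hi : i = 0
  · subst hi
    have hval : ((-(0 + 1) : ZMod p)).val = p - 1 := by
      obtain ⟨m, rfl⟩ : ∃ m, p = m + 1 := ⟨p - 1, by omega⟩
      simpa using ZMod.val_neg_one m
    have hch : k.choose (p - 1) = 0 := Nat.choose_eq_zero_of_lt (by omega)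
    simp only [aFun, hval, neg_zero, ZMod.val_zero, hch]
    simp
  · have hni : (-i : ZMod p) ≠ 0 := by simpa using hi
    have hj1 : 1 ≤ (-i : ZMod p).val := Nat.one_le_iff_ne_zero.2
      (fun h => hni ((ZMod.val_eq_zero _).1 h))
    obtain ⟨j, hj⟩ : ∃ j, (-i : ZMod p).val = j + 1 := ⟨(-i : ZMod p).val - 1, by omega⟩
    have hs : (-(i + 1) : ZMod p).val = j := by
      have h' : (-(i + 1) : ZMod p) = -i - 1 := by ring
      rw [h', val_sub_one' hni, hj]; omega
    simp only [aFun, hj, hs, Nat.choose_succ_succ]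
    push_cast
    ring

/-- The multiplicative version of `aFun p k` as an element of the base group. -/
def bElt (p k : ℕ) : ZMod p → Multiplicative (ZMod p) :=
  fun i => Multiplicative.ofAdd (aFun p k i)

abbrev SDP := (ZMod p → Multiplicative (ZMod p)) ⋊[shiftHom p] Multiplicative (ZMod p)

def wEquiv : SDP p ≃* WreathCpCp p := MulEquiv.refl _

/-- The generator of the top cyclic group. -/
def tt : SDP p := inr (Multiplicative.ofAdd 1)

lemma Mstep {p : ℕ} [NeZero p] (k : ℕ) (hk : k + 2 ≤ p) :
    bElt p k * (shiftHom p (Multiplicative.ofAdd 1) (bElt p k))⁻¹ = bElt p (k + 1) := by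
  funext i
  show Multiplicative.ofAdd (aFun p k i) * (Multiplicative.ofAdd (aFun p k (i + 1)))⁻¹
      = Multiplicative.ofAdd (aFun p (k + 1) i)
  rw [aFun_rec k hk i, ofAdd_sub, div_eq_mul_inv]

lemma comm_base_t (a : ZMod p → Multiplicative (ZMod p)) :
    (inl a : SDP p) * tt p * (inl a)⁻¹ * (tt p)⁻¹
      = inl (a * (shiftHom p (Multiplicative.ofAdd 1) a)⁻¹) := by
  have h : (tt p) * (inl a)⁻¹ * (tt p)⁻¹
      = inl (shiftHom p (Multiplicative.ofAdd 1) a⁻¹) := by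
    rw [show (tt p)⁻¹ = inr (Multiplicative.ofAdd (1:ZMod p))⁻¹ from (map_inv _ _).symm,
      ← map_inv, tt, inl_aut]
  calc (inl a : SDP p) * tt p * (inl a)⁻¹ * (tt p)⁻¹
      = inl a * ((tt p) * (inl a)⁻¹ * (tt p)⁻¹) := by group
    _ = inl a * inl (shiftHom p (Multiplicative.ofAdd 1) a⁻¹) := by rw [h]
    _ = inl (a * (shiftHom p (Multiplicative.ofAdd 1) a)⁻¹) := by rw [← map_mul, map_inv]

lemma comm_t_base (a : ZMod p → Multiplicative (ZMod p)) :
    (tt p) * (inl a) * (tt p)⁻¹ * (inl a)⁻¹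
      = inl ((shiftHom p (Multiplicative.ofAdd 1) a) * a⁻¹) := by
  rw [show (tt p)⁻¹ = inr (Multiplicative.ofAdd (1:ZMod p))⁻¹ from (map_inv _ _).symm, tt,
    ← inl_aut, ← map_inv, ← map_mul]

lemma t_pow_p : (tt p) ^ p = 1 := by
  rw [tt, ← map_pow]
  have : (Multiplicative.ofAdd (1 : ZMod p)) ^ p = 1 := by
    rw [← ofAdd_nsmul]
    simp [nsmul_eq_mul, ZMod.natCast_self]
  rw [this, map_one]

lemma Lcomm_replicate {p : ℕ} [NeZero p] :
    ∀ (n k : ℕ), k + n + 1 ≤ p →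
      Lcomm (inl (bElt p k) : SDP p) (List.replicate n (tt p)) = inl (bElt p (k + n)) := by
  intro n
  induction n with
  | zero => intro k _; rfl
  | succ n ih =>
      intro k hk
      rw [show k + (n + 1) = (k + 1) + n by omega]
      have hstep : (inl (bElt p k) : SDP p) * tt p * (inl (bElt p k))⁻¹ * (tt p)⁻¹
          = inl (bElt p (k + 1)) := by
        rw [comm_base_t, Mstep k (by omega)]
      rw [List.replicate_succ]
      show Lcomm ((inl (bElt p k) : SDP p) * tt p * (inl (bElt p k))⁻¹ * (tt p)⁻¹)
          (List.replicate n (tt p)) = _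
      rw [hstep]
      exact ih (k + 1) (by omega)

/-- a finite `p`-group (`p` odd) which is `p`-central of height `p-1` contains
no subgroup isomorphic to the regular wreath product `C_p ≀ C_p`. -/
theorem no_wreath_subgroup_of_pCentral_height
    (hp : p.Prime) (hodd : Odd p)
    (P : Type*) [Group P] [Finite P] (hP : IsPGroup p P)
    (h : Omega p 1 P ≤ upperCentralSeries P (p - 1)) :
    ¬ ∃ H : Subgroup P, Nonempty (WreathCpCp p ≃* H) := by
  rintro ⟨H, ⟨e0⟩⟩
  haveI : Fact p.Prime := ⟨hp⟩
  haveI : NeZero p := ⟨hp.pos.ne'⟩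
  have hp3 : 3 ≤ p := by
    have h2 := hp.two_le
    rcases hodd with ⟨m, hm⟩
    omega
  let ψ : SDP p →* P := (Subgroup.subtype H).comp ((e0.toMonoidHom).comp (wEquiv p).toMonoidHom)
  have hψ : Function.Injective ψ :=
    (Subgroup.subtype_injective H).comp (e0.injective.comp (wEquiv p).injective)
  have hxp : (ψ (tt p)) ^ p = 1 := by rw [← map_pow, t_pow_p, map_one]
  have hxΩ : ψ (tt p) ∈ Omega p 1 P := Subgroup.subset_closure (by simpa using hxp)
  have hxU : ψ (tt p) ∈ upperCentralSeries P (p - 1) := h hxΩ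
  set L : List (SDP p) := inl (bElt p 0)⁻¹ :: List.replicate (p - 2) (tt p) with hL
  have hlen : (L.map ψ).length = p - 1 := by
    simp only [hL, List.map_cons, List.length_cons, List.map_replicate, List.length_replicate]
    omega
  have h1 : Lcomm (ψ (tt p)) (L.map ψ) = 1 :=
    Lcomm_eq_one (L.map ψ) (ψ (tt p)) (by rw [hlen]; exact hxU)
  rw [Lcomm_map] at h1
  have h2 : Lcomm (tt p) L = 1 := hψ (by rw [h1, map_one])
  have hc1 : (tt p) * (inl (bElt p 0)⁻¹) * (tt p)⁻¹ * ((inl (bElt p 0)⁻¹ : SDP p))⁻¹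
      = inl (bElt p 1) := by
    rw [comm_t_base]
    congr 1
    rw [map_inv, inv_inv, mul_comm]
    exact Mstep 0 (by omega)
  have h3 : Lcomm (tt p) L = inl (bElt p (1 + (p - 2))) := by
    rw [hL]
    show Lcomm ((tt p) * (inl (bElt p 0)⁻¹) * (tt p)⁻¹ * ((inl (bElt p 0)⁻¹ : SDP p))⁻¹)
      (List.replicate (p - 2) (tt p)) = _
    rw [hc1]
    exact Lcomm_replicate (p - 2) 1 (by omega)
  rw [h3] at h2
  have h4 : bElt p (1 + (p - 2)) = 1 := inl_injective (by rw [h2]; rfl)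
  have h5 := congrFun h4 0
  have h6 : aFun p (1 + (p - 2)) 0 = 0 := by
    simpa [bElt] using h5
  rw [aFun] at h6
  simp only [neg_zero, ZMod.val_zero, Nat.choose_zero_right, pow_one, Nat.cast_one, mul_one] at h6
  exact one_ne_zero (by linear_combination -h6 : (1 : ZMod p) = 0)
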